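/- Let S1 = {(0,0),(0,1),(0,2),(0,3),(1,1),(1,2),(1,3),(2,2),(3,2)} and S5 = {(0,0),(0,1),(0,2),(0,3),(1,1),(1,2),(2,2),(3,1),(3,2)}. Then for every S ∈ {S1, S5} and every n ≥ 2, the number of π ∈ S_n with occ((123,S),π)=0 and occ((132,S),π)=0 equals 2·(n−1)!. -/

import Mathlib

/-- The boundary-extended sequence of positions of a candidate occurrence:
`posExt i 0 = 0`, `posExt i a = i (a-1) + 1` (1-based position) for `1 ≤ a ≤ m`,
and `posExt i (m+1) = n + 1`. -/
def posExt {m n : ℕ} (i : Fin m → Fin n) : ℕ → ℕ := fun a =>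
  if h : 1 ≤ a ∧ a ≤ m then ((i ⟨a - 1, by omega⟩ : Fin n) : ℕ) + 1
  else if a = 0 then 0 else n + 1

/-- The boundary-extended increasing rearrangement of the values of a candidate
occurrence: `valExt τ π i 0 = 0`, `valExt τ π i b = π (i (τ⁻¹ (b-1))) + 1`
(the `b`-th smallest value, 1-based) for `1 ≤ b ≤ m`, and `valExt τ π i (m+1) = n + 1`. -/
def valExt {m n : ℕ} (τ : Equiv.Perm (Fin m)) (π : Equiv.Perm (Fin n))
    (i : Fin m → Fin n) : ℕ → ℕ := fun b =>
  if h : 1 ≤ b ∧ b ≤ m then ((π (i (τ.symm ⟨b - 1, by omega⟩)) : Fin n) : ℕ) + 1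
  else if b = 0 then 0 else n + 1

/-- `i : Fin m → Fin n` is an occurrence of the mesh pattern `(τ, R)` in the
permutation `π` of `{1, …, n}` (positions and values are taken 1-based via `+1`). -/
def IsMeshOcc {m n : ℕ} (τ : Equiv.Perm (Fin m)) (R : Set (ℕ × ℕ))
    (π : Equiv.Perm (Fin n)) (i : Fin m → Fin n) : Prop :=
  StrictMono i ∧
  (∀ a b : Fin m, π (i a) < π (i b) ↔ τ a < τ b) ∧
  ∀ a b : ℕ, (a, b) ∈ R →
    ¬ ∃ j : Fin n,
        posExt i a < (j : ℕ) + 1 ∧ (j : ℕ) + 1 < posExt i (a + 1) ∧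
        valExt τ π i b < ((π j : Fin n) : ℕ) + 1 ∧
        ((π j : Fin n) : ℕ) + 1 < valExt τ π i (b + 1)

/-- The number of occurrences of the mesh pattern `(τ, R)` in `π`. -/
noncomputable def occ {m n : ℕ} (τ : Equiv.Perm (Fin m)) (R : Set (ℕ × ℕ))
    (π : Equiv.Perm (Fin n)) : ℕ :=
  Nat.card {i : Fin m → Fin n // IsMeshOcc τ R π i}

/-- Mesh patterns `(τ₁, R₁)` and `(τ₂, R₂)` are jointly equidistributed. -/
def JointlyEquidistributed {m₁ m₂ : ℕ} (τ₁ : Equiv.Perm (Fin m₁)) (R₁ : Set (ℕ × ℕ))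
    (τ₂ : Equiv.Perm (Fin m₂)) (R₂ : Set (ℕ × ℕ)) : Prop :=
  ∀ n k ℓ : ℕ,
    Nat.card {π : Equiv.Perm (Fin n) // occ τ₁ R₁ π = k ∧ occ τ₂ R₂ π = ℓ} =
    Nat.card {π : Equiv.Perm (Fin n) // occ τ₁ R₁ π = ℓ ∧ occ τ₂ R₂ π = k}

/-- The pattern 123 (identity on three letters). -/
def perm123 : Equiv.Perm (Fin 3) := 1

/-- The pattern 132 (0-indexed: `0 ↦ 0`, `1 ↦ 2`, `2 ↦ 1`). -/
def perm132 : Equiv.Perm (Fin 3) := Equiv.swap 1 2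

/-- The pattern 12 (identity on two letters). -/
def perm12 : Equiv.Perm (Fin 2) := 1

/-- The pattern 21. -/
def perm21 : Equiv.Perm (Fin 2) := Equiv.swap 0 1

/-- The unsigned Stirling numbers of the first kind. -/
def stirlingFirst : ℕ → ℕ → ℕ
  | 0, 0 => 1
  | 0, _ + 1 => 0
  | _ + 1, 0 => 0
  | n + 1, k + 1 => n * stirlingFirst n (k + 1) + stirlingFirst n k

def S1 : Set (ℕ × ℕ) := ({(0, 0), (0, 1), (0, 2), (0, 3), (1, 1), (1, 2), (1, 3), (2, 2), (3, 2)} : Set (ℕ × ℕ))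
def S5 : Set (ℕ × ℕ) := ({(0, 0), (0, 1), (0, 2), (0, 3), (1, 1), (1, 2), (2, 2), (3, 1), (3, 2)} : Set (ℕ × ℕ))

/-! ### Auxiliary lemmas -/

lemma posExt_eval' {n : ℕ} (i : Fin 3 → Fin n) :
    posExt i 0 = 0 ∧ posExt i 1 = (i 0 : ℕ) + 1 ∧ posExt i 2 = (i 1 : ℕ) + 1 ∧
      posExt i 3 = (i 2 : ℕ) + 1 ∧ posExt i 4 = n + 1 := by
  refine ⟨?_, ?_, ?_, ?_, ?_⟩ <;> simp [posExt]

lemma valExt_eval' {n : ℕ} (τ : Equiv.Perm (Fin 3)) (π : Equiv.Perm (Fin n)) (i : Fin 3 → Fin n) :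
    valExt τ π i 0 = 0 ∧ valExt τ π i 1 = (π (i (τ.symm 0)) : ℕ) + 1 ∧
      valExt τ π i 2 = (π (i (τ.symm 1)) : ℕ) + 1 ∧
      valExt τ π i 3 = (π (i (τ.symm 2)) : ℕ) + 1 ∧ valExt τ π i 4 = n + 1 := by
  refine ⟨?_, ?_, ?_, ?_, ?_⟩ <;> simp [valExt]

lemma strictMono3' {n : ℕ} {a b c : Fin n} (h1 : a < b) (h2 : b < c) :
    StrictMono ![a, b, c] := by
  intro x y hxy
  fin_cases x <;> fin_cases y <;>
    first
      | exact absurd hxy (by decide)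
      | simpa using h1
      | simpa using h2
      | simpa using h1.trans h2

/-- If the whole column to the left of the first pattern position is shaded, and
`π (1)` is among the two largest values, there is no occurrence of any pattern
`τ` of length 3 whose first letter is the smallest. -/
lemma no_occ' {n : ℕ} (π : Equiv.Perm (Fin n)) (S : Set (ℕ × ℕ))
    (hS : (0,0) ∈ S ∧ (0,1) ∈ S ∧ (0,2) ∈ S ∧ (0,3) ∈ S)
    (τ : Equiv.Perm (Fin 3)) (hτ1 : τ 0 < τ 1) (hτ2 : τ 0 < τ 2)
    (hn : 0 < n) (hx : n - 2 ≤ (π ⟨0, hn⟩ : ℕ)) (i : Fin 3 → Fin n) :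
    ¬ IsMeshOcc τ S π i := by
  rintro ⟨hmono, hord, hmesh⟩
  obtain ⟨eP0, eP1, eP2, eP3, eP4⟩ := posExt_eval' i
  obtain ⟨eV0, eV1, eV2, eV3, eV4⟩ := valExt_eval' τ π i
  have hu12 : (π (i (τ.symm 0)) : ℕ) < (π (i (τ.symm 1)) : ℕ) := by
    have := (hord (τ.symm 0) (τ.symm 1)).mpr (by simp)
    exact this
  have hu23 : (π (i (τ.symm 1)) : ℕ) < (π (i (τ.symm 2)) : ℕ) := by
    have := (hord (τ.symm 1) (τ.symm 2)).mpr (by simp)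
    exact this
  have hi0 : i 0 = ⟨0, hn⟩ := by
    by_contra h0
    have h0' : 0 < (i 0 : ℕ) := by
      rcases Nat.eq_zero_or_pos (i 0 : ℕ) with h | h
      · exact absurd (Fin.ext h) h0
      · exact h
    set j0 : Fin n := ⟨0, hn⟩ with hj0
    have hne : ∀ c : Fin 3, (π j0 : ℕ) ≠ (π (i c) : ℕ) := by
      intro c hc
      have : j0 = i c := π.injective (Fin.val_injective hc)
      have : (0:ℕ) = (i c : ℕ) := congrArg Fin.val this
      have hle : i 0 ≤ i c := hmono.monotone (Fin.zero_le c)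
      omega
    have hlt : (π j0 : ℕ) < n := (π j0).isLt
    have m0 : ¬ _ := fun h => hmesh 0 0 hS.1 ⟨j0, h⟩
    have m1 : ¬ _ := fun h => hmesh 0 1 hS.2.1 ⟨j0, h⟩
    have m2 : ¬ _ := fun h => hmesh 0 2 hS.2.2.1 ⟨j0, h⟩
    have m3 : ¬ _ := fun h => hmesh 0 3 hS.2.2.2 ⟨j0, h⟩
    simp only [Nat.reduceAdd, eP0, eP1, eV0, eV1, eV2, eV3, eV4] at m0 m1 m2 m3
    have hn1 := hne (τ.symm 0); have hn2 := hne (τ.symm 1); have hn3 := hne (τ.symm 2)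
    have hj0v : (j0 : ℕ) = 0 := rfl
    omega
  have hv1 : π (i 0) < π (i 1) := (hord 0 1).mpr hτ1
  have hv2 : π (i 0) < π (i 2) := (hord 0 2).mpr hτ2
  have hvne : π (i 1) ≠ π (i 2) := fun h =>
    absurd (π.injective h) (hmono (show (1:Fin 3) < 2 by decide)).ne
  have h1 : (π (i 0) : ℕ) < (π (i 1) : ℕ) := hv1
  have h2 : (π (i 0) : ℕ) < (π (i 2) : ℕ) := hv2
  have h3 : (π (i 1) : ℕ) ≠ (π (i 2) : ℕ) := fun h => hvne (Fin.val_injective h)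
  have h4 : (π (i 1) : ℕ) < n := (π (i 1)).isLt
  have h5 : (π (i 2) : ℕ) < n := (π (i 2)).isLt
  rw [hi0] at h1 h2
  omega

lemma exists_occ_S5' {n : ℕ} (hn : 0 < n) (π : Equiv.Perm (Fin n))
    (hx : (π ⟨0, hn⟩ : ℕ) + 3 ≤ n) :
    (∃ i, IsMeshOcc perm123 S5 π i) ∨ (∃ i, IsMeshOcc perm132 S5 π i) := by
  set x : ℕ := (π ⟨0, hn⟩ : ℕ) with hxdef
  set p : Fin n := π.symm ⟨x + 1, by omega⟩ with hpdef
  set q : Fin n := π.symm ⟨x + 2, by omega⟩ with hqdef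
  have hπp : (π p : ℕ) = x + 1 := by rw [hpdef, Equiv.apply_symm_apply]
  have hπq : (π q : ℕ) = x + 2 := by rw [hqdef, Equiv.apply_symm_apply]
  have hp0 : (0 : ℕ) < (p : ℕ) := by
    rcases Nat.eq_zero_or_pos (p : ℕ) with h | h
    · exfalso; have : p = ⟨0, hn⟩ := Fin.ext h
      rw [this] at hπp; omega
    · exact h
  have hq0 : (0 : ℕ) < (q : ℕ) := by
    rcases Nat.eq_zero_or_pos (q : ℕ) with h | h
    · exfalso; have : q = ⟨0, hn⟩ := Fin.ext h
      rw [this] at hπq; omega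
    · exact h
  have hpq : p ≠ q := by
    intro h; rw [h] at hπp; omega
  have mesh_key : ∀ (τ : Equiv.Perm (Fin 3)) (i : Fin 3 → Fin n),
      posExt i 1 = 1 →
      valExt τ π i 1 = x + 1 → valExt τ π i 2 = x + 2 → valExt τ π i 3 = x + 3 →
      ∀ a b : ℕ, (a, b) ∈ S5 →
        ¬ ∃ j : Fin n,
            posExt i a < (j : ℕ) + 1 ∧ (j : ℕ) + 1 < posExt i (a + 1) ∧
            valExt τ π i b < ((π j : Fin n) : ℕ) + 1 ∧
            ((π j : Fin n) : ℕ) + 1 < valExt τ π i (b + 1) := by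
    intro τ i e1 f1 f2 f3 a b hab
    obtain ⟨g0, g1, g2, g3, g4⟩ := posExt_eval' i
    rintro ⟨j, hj1, hj2, hj3, hj4⟩
    simp only [S5, Set.mem_insert_iff, Set.mem_singleton_iff, Prod.mk.injEq] at hab
    obtain ⟨rfl, rfl⟩ | ⟨rfl, rfl⟩ | ⟨rfl, rfl⟩ | ⟨rfl, rfl⟩ | ⟨rfl, rfl⟩ | ⟨rfl, rfl⟩ |
      ⟨rfl, rfl⟩ | ⟨rfl, rfl⟩ | ⟨rfl, rfl⟩ := hab <;>
      simp only [Nat.reduceAdd, e1, f1, f2, f3] at hj1 hj2 hj3 hj4 <;> omega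
  rcases lt_or_gt_of_ne hpq with hlt | hlt
  · left
    refine ⟨![⟨0, hn⟩, p, q], strictMono3' (Fin.lt_def.mpr (by simpa using hp0)) hlt, ?_, ?_⟩
    · intro a b
      fin_cases a <;> fin_cases b <;>
        simp [perm123, Fin.lt_def, hπp, hπq] <;> omega
    · obtain ⟨g0, g1, g2, g3, g4⟩ := posExt_eval' ![⟨0, hn⟩, p, q]
      obtain ⟨f0, f1, f2, f3, f4⟩ := valExt_eval' perm123 π ![⟨0, hn⟩, p, q]
      refine mesh_key perm123 _ (by simp [g1]) ?_ ?_ ?_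
      · rw [f1]; simp [perm123, Equiv.Perm.one_symm, hxdef]
      · rw [f2]; simp [perm123, Equiv.Perm.one_symm, hπp]
      · rw [f3]; simp [perm123, Equiv.Perm.one_symm, hπq]
  · right
    refine ⟨![⟨0, hn⟩, q, p], strictMono3' (Fin.lt_def.mpr (by simpa using hq0)) hlt, ?_, ?_⟩
    · intro a b
      fin_cases a <;> fin_cases b <;>
        simp [perm132, Fin.lt_def, hπp, hπq, Equiv.swap_apply_def] <;> omega
    · obtain ⟨g0, g1, g2, g3, g4⟩ := posExt_eval' ![⟨0, hn⟩, q, p]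
      obtain ⟨f0, f1, f2, f3, f4⟩ := valExt_eval' perm132 π ![⟨0, hn⟩, q, p]
      have w0 : (Equiv.symm perm132) 0 = 0 := by decide
      have w1 : (Equiv.symm perm132) 1 = 2 := by decide
      have w2 : (Equiv.symm perm132) 2 = 1 := by decide
      refine mesh_key perm132 _ (by simp [g1]) ?_ ?_ ?_
      · rw [f1, w0]; simp [hxdef]
      · rw [f2, w1]; simp [hπp]
      · rw [f3, w2]; simp [hπq]

lemma exists_occ_S1' {n : ℕ} (hn : 0 < n) (π : Equiv.Perm (Fin n))
    (hx : (π ⟨0, hn⟩ : ℕ) + 3 ≤ n) :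
    (∃ i, IsMeshOcc perm123 S1 π i) ∨ (∃ i, IsMeshOcc perm132 S1 π i) := by
  set x : ℕ := (π ⟨0, hn⟩ : ℕ) with hxdef
  set T : Finset (Fin n) := Finset.filter (fun j => x < (π j : ℕ)) Finset.univ with hTdef
  have hTne : T.Nonempty := by
    refine ⟨π.symm ⟨x + 1, by omega⟩, ?_⟩
    simp [hTdef]
  set i1 : Fin n := T.min' hTne with hi1def
  have hi1T : x < (π i1 : ℕ) := by
    have := T.min'_mem hTne
    simpa [hTdef] using this
  have key : ∀ j : Fin n, (j : ℕ) < (i1 : ℕ) → (π j : ℕ) ≤ x := by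
    intro j hj
    by_contra hc
    push_neg at hc
    have hjT : j ∈ T := by simp [hTdef, hc]
    have := T.min'_le j hjT
    rw [Fin.le_def] at this
    omega
  have hi10 : 0 < (i1 : ℕ) := by
    rcases Nat.eq_zero_or_pos (i1 : ℕ) with h | h
    · exfalso
      have : i1 = ⟨0, hn⟩ := Fin.ext h
      rw [this] at hi1T; omega
    · exact h
  have mesh_key : ∀ (τ : Equiv.Perm (Fin 3)) (i : Fin 3 → Fin n) (v : ℕ),
      posExt i 1 = 1 → posExt i 2 = (i1 : ℕ) + 1 →
      valExt τ π i 1 = x + 1 → valExt τ π i 2 = v → valExt τ π i 3 = v + 1 →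
      x + 2 ≤ v →
      ∀ a b : ℕ, (a, b) ∈ S1 →
        ¬ ∃ j : Fin n,
            posExt i a < (j : ℕ) + 1 ∧ (j : ℕ) + 1 < posExt i (a + 1) ∧
            valExt τ π i b < ((π j : Fin n) : ℕ) + 1 ∧
            ((π j : Fin n) : ℕ) + 1 < valExt τ π i (b + 1) := by
    intro τ i v e1 e2 f1 f2 f3 hv a b hab
    rintro ⟨j, hj1, hj2, hj3, hj4⟩
    have hkj : (i1 : ℕ) ≤ (j : ℕ) ∨ (π j : ℕ) ≤ x := by
      rcases le_or_gt (i1 : ℕ) (j : ℕ) with h | h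
      · exact Or.inl h
      · exact Or.inr (key j h)
    simp only [S1, Set.mem_insert_iff, Set.mem_singleton_iff, Prod.mk.injEq] at hab
    obtain ⟨rfl, rfl⟩ | ⟨rfl, rfl⟩ | ⟨rfl, rfl⟩ | ⟨rfl, rfl⟩ | ⟨rfl, rfl⟩ | ⟨rfl, rfl⟩ |
      ⟨rfl, rfl⟩ | ⟨rfl, rfl⟩ | ⟨rfl, rfl⟩ := hab <;>
      simp only [Nat.reduceAdd, e1, e2, f1, f2, f3] at hj1 hj2 hj3 hj4 <;> omega
  set y : ℕ := (π i1 : ℕ) with hydef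
  have hyn : y < n := (π i1).isLt
  rcases eq_or_lt_of_le (show x + 1 ≤ y by omega) with hxy | hxy
  · left
    set i2 : Fin n := π.symm ⟨x + 2, by omega⟩ with hi2def
    have hπ2 : (π i2 : ℕ) = x + 2 := by rw [hi2def, Equiv.apply_symm_apply]
    have hi2T : i1 ≤ i2 := T.min'_le i2 (by simp [hTdef, hπ2])
    have hi12 : i1 < i2 := by
      rcases lt_or_eq_of_le hi2T with h | h
      · exact h
      · exfalso; rw [h] at hydef; omega
    refine ⟨![⟨0, hn⟩, i1, i2], strictMono3' (Fin.lt_def.mpr (by simpa using hi10)) hi12, ?_, ?_⟩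
    · intro a b
      fin_cases a <;> fin_cases b <;>
        simp [perm123, Fin.lt_def, ← hydef, hπ2] <;> omega
    · obtain ⟨g0, g1, g2, g3, g4⟩ := posExt_eval' ![⟨0, hn⟩, i1, i2]
      obtain ⟨f0, f1, f2, f3, f4⟩ := valExt_eval' perm123 π ![⟨0, hn⟩, i1, i2]
      refine mesh_key perm123 _ (x + 2) (by simp [g1]) (by rw [g2]; simp) ?_ ?_ ?_ (by omega)
      · rw [f1]; simp [perm123, Equiv.Perm.one_symm, hxdef]
      · rw [f2]; simp [perm123, Equiv.Perm.one_symm, ← hydef]; omega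
      · rw [f3]; simp [perm123, Equiv.Perm.one_symm, hπ2]
  · right
    set i2 : Fin n := π.symm ⟨y - 1, by omega⟩ with hi2def
    have hπ2 : (π i2 : ℕ) = y - 1 := by rw [hi2def, Equiv.apply_symm_apply]
    have hi2T : i1 ≤ i2 := T.min'_le i2 (by simp [hTdef, hπ2]; omega)
    have hi12 : i1 < i2 := by
      rcases lt_or_eq_of_le hi2T with h | h
      · exact h
      · exfalso; rw [h] at hydef; omega
    refine ⟨![⟨0, hn⟩, i1, i2], strictMono3' (Fin.lt_def.mpr (by simpa using hi10)) hi12, ?_, ?_⟩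
    · intro a b
      fin_cases a <;> fin_cases b <;>
        simp [perm132, Fin.lt_def, ← hydef, hπ2, Equiv.swap_apply_def] <;> omega
    · obtain ⟨g0, g1, g2, g3, g4⟩ := posExt_eval' ![⟨0, hn⟩, i1, i2]
      obtain ⟨f0, f1, f2, f3, f4⟩ := valExt_eval' perm132 π ![⟨0, hn⟩, i1, i2]
      have w0 : (Equiv.symm perm132) 0 = 0 := by decide
      have w1 : (Equiv.symm perm132) 1 = 2 := by decide
      have w2 : (Equiv.symm perm132) 2 = 1 := by decide
      refine mesh_key perm132 _ (y - 1 + 1) (by simp [g1]) (by rw [g2]; simp) ?_ ?_ ?_ (by omega)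
      · rw [f1, w0]; simp [hxdef]
      · rw [f2, w1]; simp [hπ2]
      · rw [f3, w2]; simp [← hydef]; omega

lemma card_fix' (m : ℕ) (c : Fin (m + 1)) :
    Nat.card {π : Equiv.Perm (Fin (m + 1)) // π 0 = c} = m.factorial := by
  have e : {π : Equiv.Perm (Fin (m + 1)) // π 0 = c} ≃ Equiv.Perm (Fin m) :=
    { toFun := fun π => (Equiv.Perm.decomposeFin π.1).2
      invFun := fun e => ⟨Equiv.Perm.decomposeFin.symm (c, e), by simp⟩
      left_inv := by
        rintro ⟨π, hπ⟩
        ext1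
        have h1 : (Equiv.Perm.decomposeFin π).1 = c := by
          conv_lhs at hπ => rw [← Equiv.Perm.decomposeFin.symm_apply_apply π]
          rw [Equiv.Perm.decomposeFin_symm_apply_zero] at hπ
          exact hπ
        simp only
        rw [← h1, Prod.mk.eta, Equiv.symm_apply_apply]
      right_inv := by
        intro e
        simp }
  rw [Nat.card_congr e, Nat.card_eq_fintype_card, Fintype.card_perm, Fintype.card_fin]

lemma card_top2' (m : ℕ) (hm : 1 ≤ m) :
    Nat.card {π : Equiv.Perm (Fin (m + 1)) // m + 1 - 2 ≤ ((π 0 : Fin (m + 1)) : ℕ)} =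
      2 * m.factorial := by
  have hpred : ∀ π : Equiv.Perm (Fin (m + 1)),
      (m + 1 - 2 ≤ ((π 0 : Fin (m + 1)) : ℕ)) ↔
        (π 0 = (⟨m - 1, by omega⟩ : Fin (m + 1)) ∨ π 0 = (⟨m, by omega⟩ : Fin (m + 1))) := by
    intro π
    have h := (π 0).isLt
    constructor
    · intro h1
      rcases Nat.lt_or_ge ((π 0 : Fin (m+1)) : ℕ) m with h2 | h2
      · left; rw [Fin.ext_iff]; show ((π 0 : Fin (m+1)) : ℕ) = m - 1; omega
      · right; rw [Fin.ext_iff]; show ((π 0 : Fin (m+1)) : ℕ) = m; omega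
    · rintro (h1 | h1) <;> rw [h1] <;> simp <;> omega
  rw [Nat.card_congr (Equiv.subtypeEquivRight hpred)]
  have hdisj : Disjoint
      (fun π : Equiv.Perm (Fin (m + 1)) => π 0 = (⟨m - 1, by omega⟩ : Fin (m + 1)))
      (fun π => π 0 = (⟨m, by omega⟩ : Fin (m + 1))) := by
    rw [Pi.disjoint_iff]
    intro π
    rw [Prop.disjoint_iff]
    rintro ⟨h1, h2⟩
    rw [h1] at h2
    have := congrArg Fin.val h2
    simp at this
    omega
  rw [Nat.card_congr (subtypeOrEquiv _ _ hdisj), Nat.card_sum, card_fix', card_fix']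
  ring

theorem statement_7 :
    ∀ S ∈ ({S1, S5} : Set (Set (ℕ × ℕ))), ∀ n : ℕ, 2 ≤ n →
      Nat.card {π : Equiv.Perm (Fin n) // occ perm123 S π = 0 ∧ occ perm132 S π = 0} =
        2 * Nat.factorial (n - 1) := by
  intro S hS n hn
  simp only [Set.mem_insert_iff, Set.mem_singleton_iff] at hS
  obtain ⟨m, rfl⟩ : ∃ m, n = m + 1 := ⟨n - 1, by omega⟩
  have hm : 1 ≤ m := by omega
  have hn0 : 0 < m + 1 := Nat.succ_pos m
  have h00 : (⟨0, hn0⟩ : Fin (m + 1)) = 0 := by apply Fin.ext; simp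
  have hchar : ∀ π : Equiv.Perm (Fin (m + 1)),
      (occ perm123 S π = 0 ∧ occ perm132 S π = 0) ↔
        (m + 1 - 2 ≤ ((π 0 : Fin (m + 1)) : ℕ)) := by
    intro π
    constructor
    · rintro ⟨h1, h2⟩
      by_contra hcon
      have hx : (π ⟨0, hn0⟩ : ℕ) + 3 ≤ m + 1 := by
        rw [h00]
        omega
      have hocc : (∃ i, IsMeshOcc perm123 S π i) ∨ (∃ i, IsMeshOcc perm132 S π i) := by
        rcases hS with rfl | rfl
        · exact exists_occ_S1' hn0 π hx
        · exact exists_occ_S5' hn0 π hx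
      rcases hocc with ⟨i, hi⟩ | ⟨i, hi⟩
      · have hne : Nonempty {i // IsMeshOcc perm123 S π i} := ⟨⟨i, hi⟩⟩
        exact absurd h1 (by rw [occ]; exact Nat.card_pos.ne')
      · have hne : Nonempty {i // IsMeshOcc perm132 S π i} := ⟨⟨i, hi⟩⟩
        exact absurd h2 (by rw [occ]; exact Nat.card_pos.ne')
    · intro hx
      have hx' : m + 1 - 2 ≤ (π ⟨0, hn0⟩ : ℕ) := by rw [h00]; exact hx
      have hcols : (0,0) ∈ S ∧ (0,1) ∈ S ∧ (0,2) ∈ S ∧ (0,3) ∈ S := by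
        rcases hS with rfl | rfl <;> refine ⟨?_, ?_, ?_, ?_⟩ <;> simp [S1, S5]
      constructor
      · rw [occ, Nat.card_eq_zero]
        left
        exact ⟨fun i => no_occ' π S hcols perm123 (by decide) (by decide) hn0 hx' i.1 i.2⟩
      · rw [occ, Nat.card_eq_zero]
        left
        exact ⟨fun i => no_occ' π S hcols perm132 (by decide) (by decide) hn0 hx' i.1 i.2⟩
  rw [Nat.card_congr (Equiv.subtypeEquivRight hchar), card_top2' m hm]
  simp
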